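/- Assume 2 is a non-zero-divisor in k. Then the monomials x₁^(2a) · x₂^(2b), indexed by pairs (a, b) ∈ ℕ × ℕ, form a basis of the center of R as a k-module. (In particular the center Z(R) is isomorphic to a polynomial ring k[x₁², x₂²], and its graded dimension, with deg xᵢ = 2, is 1/(1 − q⁴)².) -/

import Mathlib

/-- The anticommutation relation `x₁x₂ + x₂x₁ = 0` on the free `k`-algebra
on two generators. -/
inductive OddRel (k : Type*) [CommRing k] :
    FreeAlgebra k (Fin 2) → FreeAlgebra k (Fin 2) → Prop
  | anticomm : OddRel k
      (FreeAlgebra.ι k (0 : Fin 2) * FreeAlgebra.ι k (1 : Fin 2) +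
        FreeAlgebra.ι k (1 : Fin 2) * FreeAlgebra.ι k (0 : Fin 2)) 0

/-- The `k`-algebra of skew polynomials in two variables,
`R = k⟨x₁,x₂⟩/(x₁x₂ + x₂x₁)`. -/
abbrev OddPoly (k : Type*) [CommRing k] := RingQuot (OddRel k)

/-- The generators `x₁ = X k 0` and `x₂ = X k 1` of `R`. -/
noncomputable def X (k : Type*) [CommRing k] (i : Fin 2) : OddPoly k :=
  RingQuot.mkAlgHom k (OddRel k) (FreeAlgebra.ι k i)

section Work
variable (k : Type*) [CommRing k]

/-- monomials -/
noncomputable def mo (a b : ℕ) : OddPoly k := X k 0 ^ a * X k 1 ^ b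

/-- the coordinate module -/
abbrev V := (ℕ × ℕ) →₀ k

/-- L1 -/
noncomputable def L1 : Module.End k (V k) :=
  Finsupp.lsum k fun p => Finsupp.lsingle (p.1 + 1, p.2)

/-- L2 -/
noncomputable def L2 : Module.End k (V k) :=
  Finsupp.lsum k fun p => ((-1 : k) ^ p.1) • Finsupp.lsingle (p.1, p.2 + 1)

lemma L1_single (p : ℕ × ℕ) (c : k) : L1 k (Finsupp.single p c) = Finsupp.single (p.1+1, p.2) c := by
  simp [L1]

lemma L2_single (p : ℕ × ℕ) (c : k) :
    L2 k (Finsupp.single p c) = (-1:k)^p.1 • Finsupp.single (p.1, p.2+1) c := by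
  simp [L2]

lemma L_rel : L1 k * L2 k + L2 k * L1 k = 0 := by
  apply Finsupp.lhom_ext
  intro p c
  simp only [LinearMap.add_apply, Module.End.mul_apply, L1_single, L2_single,
    LinearMap.map_smul, LinearMap.zero_apply]
  simp [pow_succ]

end Work
section Work2
variable (k : Type*) [CommRing k]

noncomputable def φ : FreeAlgebra k (Fin 2) →ₐ[k] Module.End k (V k) :=
  FreeAlgebra.lift k ![L1 k, L2 k]

noncomputable def Φ : OddPoly k →ₐ[k] Module.End k (V k) :=
  RingQuot.liftAlgHom k ⟨φ k, by
    rintro x y ⟨⟩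
    simp only [map_add, map_mul, map_zero, φ, FreeAlgebra.lift_ι_apply]
    exact L_rel k⟩

lemma Φ_X (i : Fin 2) : Φ k (X k i) = ![L1 k, L2 k] i := by
  rw [X, Φ, RingQuot.liftAlgHom_mkAlgHom_apply]
  simp [φ]

lemma L2_pow (b c : ℕ) :
    (L2 k ^ b) (Finsupp.single (0, c) 1) = Finsupp.single (0, c + b) 1 := by
  induction b with
  | zero => simp
  | succ n ih =>
    rw [pow_succ', Module.End.mul_apply, ih, L2_single]
    simp [add_assoc]

lemma L1_pow (a c d : ℕ) :
    (L1 k ^ a) (Finsupp.single (c, d) 1) = Finsupp.single (c + a, d) 1 := by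
  induction a with
  | zero => simp
  | succ n ih =>
    rw [pow_succ', Module.End.mul_apply, ih, L1_single]
    simp [add_assoc]

lemma Φ_mo (a b : ℕ) :
    Φ k (mo k a b) (Finsupp.single (0, 0) 1) = Finsupp.single (a, b) 1 := by
  rw [mo, map_mul, map_pow, map_pow, Φ_X, Φ_X, Module.End.mul_apply]
  show (L1 k ^ a) ((L2 k ^ b) _) = _
  rw [L2_pow, L1_pow]
  simp

end Work2
section Work3
variable (k : Type*) [CommRing k]

/-- evaluation linear map -/
noncomputable def T : OddPoly k →ₗ[k] V k :=
  (LinearMap.applyₗ (Finsupp.single (0,0) (1:k))).comp (Φ k).toLinearMap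

lemma T_mo (a b : ℕ) : T k (mo k a b) = Finsupp.single (a, b) 1 := Φ_mo k a b

lemma mo_indep : LinearIndependent k (fun p : ℕ × ℕ => mo k p.1 p.2) := by
  apply LinearIndependent.of_comp (T k)
  have : (T k ∘ fun p : ℕ × ℕ => mo k p.1 p.2) = fun p => Finsupp.single p 1 := by
    funext p; simp [T_mo]
  rw [this]
  have h := (Finsupp.basisSingleOne (R := k) (ι := ℕ × ℕ)).linearIndependent
  rwa [Finsupp.coe_basisSingleOne] at h

lemma hneg_mul (a b : OddPoly k) : -a * b = -(a * b) := neg_mul a b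
lemma hsmul_neg (c : k) (a : OddPoly k) : c • -a = -(c • a) := smul_neg c a
lemma hneg_smul (c : k) (a : OddPoly k) : (-c) • a = -(c • a) := neg_smul c a

/-- anticommutation in OddPoly -/
lemma swap1 : X k 1 * X k 0 = -(X k 0 * X k 1) := by
  have := RingQuot.mkAlgHom_rel k (OddRel.anticomm (k := k))
  simp only [map_add, map_mul, map_zero] at this
  rw [eq_neg_iff_add_eq_zero]
  rw [add_comm]
  exact this

lemma swap_pow1 (b : ℕ) : X k 1 ^ b * X k 0 = ((-1:k)^b) • (X k 0 * X k 1 ^ b) := by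
  induction b with
  | zero => simp
  | succ n ih =>
    rw [pow_succ', mul_assoc, ih, mul_smul_comm, ← mul_assoc, swap1]
    rw [hneg_mul, hsmul_neg, mul_assoc, ← pow_succ', pow_succ ((-1:k)) n,
      mul_neg_one, hneg_smul]

lemma swap_pow (b a : ℕ) : X k 1 ^ b * X k 0 ^ a = ((-1:k)^(b*a)) • (X k 0 ^ a * X k 1 ^ b) := by
  induction a with
  | zero => simp
  | succ n ih =>
    rw [pow_succ (X k 0), ← mul_assoc, ih, smul_mul_assoc, mul_assoc, swap_pow1,
      mul_smul_comm, smul_smul, ← pow_add]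
    rw [← mul_assoc, ← pow_succ (X k 0)]
    congr 1

lemma mo_mul (a b c d : ℕ) :
    mo k a b * mo k c d = ((-1:k)^(b*c)) • mo k (a+c) (b+d) := by
  rw [mo, mo, mo, mul_assoc, ← mul_assoc (X k 1 ^ b), swap_pow, pow_add, pow_add]
  simp only [smul_mul_assoc, mul_smul_comm, mul_assoc]

end Work3
section Work4
variable (k : Type*) [CommRing k]

noncomputable def S : Submodule k (OddPoly k) :=
  Submodule.span k (Set.range fun p : ℕ × ℕ => mo k p.1 p.2)

lemma mo_mem (a b : ℕ) : mo k a b ∈ S k :=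
  Submodule.subset_span ⟨(a, b), rfl⟩

lemma S_mul {x y : OddPoly k} (hx : x ∈ S k) (hy : y ∈ S k) : x * y ∈ S k := by
  refine Submodule.span_induction ?_ ?_ ?_ ?_ hx
  · rintro x ⟨p, rfl⟩
    refine Submodule.span_induction ?_ ?_ ?_ ?_ hy
    · rintro y ⟨q, rfl⟩
      rw [mo_mul]
      exact Submodule.smul_mem _ _ (mo_mem k _ _)
    · rw [mul_zero]; exact Submodule.zero_mem _
    · intro a b _ _ ha hb; rw [mul_add]; exact Submodule.add_mem _ ha hb
    · intro c a _ ha; rw [mul_smul_comm]; exact Submodule.smul_mem _ _ ha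
  · rw [zero_mul]; exact Submodule.zero_mem _
  · intro a b _ _ ha hb; rw [add_mul]; exact Submodule.add_mem _ ha hb
  · intro c a _ ha; rw [smul_mul_assoc]; exact Submodule.smul_mem _ _ ha

lemma one_eq_mo : (1 : OddPoly k) = mo k 0 0 := by simp [mo]

lemma X_eq_mkAlgHom (i : Fin 2) :
    RingQuot.mkAlgHom k (OddRel k) (FreeAlgebra.ι k i) = X k i := rfl

lemma mo_top (y : OddPoly k) : y ∈ S k := by
  obtain ⟨f, rfl⟩ := RingQuot.mkAlgHom_surjective k (OddRel k) y
  induction f using FreeAlgebra.induction with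
  | grade0 r =>
    rw [AlgHom.commutes, Algebra.algebraMap_eq_smul_one, one_eq_mo]
    exact Submodule.smul_mem _ _ (mo_mem k 0 0)
  | grade1 i =>
    rw [X_eq_mkAlgHom]
    have h0 : X k 0 = mo k 1 0 := by simp [mo]
    have h1 : X k 1 = mo k 0 1 := by simp [mo]
    fin_cases i
    · exact h0 ▸ mo_mem k 1 0
    · exact h1 ▸ mo_mem k 0 1
  | mul f g hf hg => rw [map_mul]; exact S_mul k hf hg
  | add f g hf hg => rw [map_add]; exact Submodule.add_mem _ hf hg

/-- basis of OddPoly by monomials -/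
noncomputable def B : Module.Basis (ℕ × ℕ) k (OddPoly k) :=
  Module.Basis.mk (mo_indep k) (fun y _ => mo_top k y)

lemma B_apply (p : ℕ × ℕ) : B k p = mo k p.1 p.2 := Module.Basis.mk_apply _ _ _

end Work4
section Work5
variable (k : Type*) [CommRing k]

lemma mul_mo_left0 (a b : ℕ) : X k 0 * mo k a b = mo k (a+1) b := by
  rw [mo, mo, ← mul_assoc, ← pow_succ']

lemma mul_mo_right0 (a b : ℕ) : mo k a b * X k 0 = ((-1:k)^b) • mo k (a+1) b := by
  rw [mo, mo, mul_assoc, swap_pow1, mul_smul_comm, ← mul_assoc, ← pow_succ]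

lemma mul_mo_left1 (a b : ℕ) : X k 1 * mo k a b = ((-1:k)^a) • mo k a (b+1) := by
  have h := swap_pow k 1 a
  rw [pow_one, one_mul] at h
  rw [mo, mo, ← mul_assoc, h, smul_mul_assoc, mul_assoc, ← pow_succ']

lemma mul_mo_right1 (a b : ℕ) : mo k a b * X k 1 = mo k a (b+1) := by
  rw [mo, mo, mul_assoc, ← pow_succ]

lemma mo_central (a b : ℕ) : mo k (2*a) (2*b) ∈ Subalgebra.center k (OddPoly k) := by
  rw [Subalgebra.mem_center_iff]
  intro g
  obtain ⟨f, rfl⟩ := RingQuot.mkAlgHom_surjective k (OddRel k) g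
  induction f using FreeAlgebra.induction with
  | grade0 r => rw [AlgHom.commutes]; exact Algebra.commutes r (mo k (2*a) (2*b))
  | grade1 i =>
    rw [X_eq_mkAlgHom]
    have h0 : X k 0 * mo k (2*a) (2*b) = mo k (2*a) (2*b) * X k 0 := by
      rw [mul_mo_left0, mul_mo_right0, pow_mul, neg_one_sq, one_pow, one_smul]
    have h1 : X k 1 * mo k (2*a) (2*b) = mo k (2*a) (2*b) * X k 1 := by
      rw [mul_mo_left1, mul_mo_right1, pow_mul, neg_one_sq, one_pow, one_smul]
    fin_cases i
    · exact h0
    · exact h1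
  | mul f g hf hg => rw [map_mul, mul_assoc, hg, ← mul_assoc, hf, mul_assoc]
  | add f g hf hg => rw [map_add, add_mul, mul_add, hf, hg]

noncomputable def Wmap (w : ℕ × ℕ → k) (f : ℕ × ℕ → ℕ × ℕ) : Module.End k (V k) :=
  Finsupp.lsum k fun p => w p • (Finsupp.lsingle (f p) : k →ₗ[k] V k)

lemma Wmap_single (w : ℕ × ℕ → k) (f : ℕ × ℕ → ℕ × ℕ) (p : ℕ × ℕ) (v : k) :
    Wmap k w f (Finsupp.single p v) = w p • Finsupp.single (f p) v := by
  simp [Wmap]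

lemma lsum_w_apply (w : ℕ × ℕ → k) (f : ℕ × ℕ → ℕ × ℕ) (hf : Function.Injective f)
    (c : V k) (q : ℕ × ℕ) :
    Wmap k w f c (f q) = w q * c q := by
  induction c using Finsupp.induction_linear with
  | zero => simp
  | add x y hx hy => rw [map_add, Finsupp.add_apply, hx, hy, Finsupp.add_apply, mul_add]
  | single p v =>
    rw [Wmap_single]
    simp only [Finsupp.smul_apply, Finsupp.single_apply, smul_eq_mul]
    by_cases h : p = q
    · subst h; simp
    · rw [if_neg (fun hh => h (hf hh)), if_neg h, mul_zero, mul_zero]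

end Work5
section Work6
variable (k : Type*) [CommRing k]

noncomputable def C0 : Module.End k (V k) :=
  Wmap k (fun p => 1 - (-1:k)^p.2) (fun p => (p.1 + 1, p.2))

noncomputable def C1 : Module.End k (V k) :=
  Wmap k (fun p => (-1:k)^p.1 - 1) (fun p => (p.1, p.2 + 1))

lemma hsmul_sub (c : k) (x y : OddPoly k) : c • (x - y) = c • x - c • y := smul_sub c x y

lemma hsub_smul (a b : k) (x : OddPoly k) : (a - b) • x = a • x - b • x := sub_smul a b x

noncomputable def Dif0 : OddPoly k →ₗ[k] OddPoly k :=
  LinearMap.mulLeft k (X k 0) - LinearMap.mulRight k (X k 0)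

noncomputable def Dif1 : OddPoly k →ₗ[k] OddPoly k :=
  LinearMap.mulLeft k (X k 1) - LinearMap.mulRight k (X k 1)

lemma key0 : (Dif0 k).comp ((B k).repr.symm : V k →ₗ[k] OddPoly k) =
    (((B k).repr.symm : V k →ₗ[k] OddPoly k)).comp (C0 k) := by
  apply Finsupp.lhom_ext
  intro p v
  simp only [LinearMap.comp_apply, LinearEquiv.coe_coe, Module.Basis.repr_symm_single, C0, Wmap_single]
  rw [map_smul, map_smul, Module.Basis.repr_symm_single, Dif0, LinearMap.sub_apply,
    LinearMap.mulLeft_apply, LinearMap.mulRight_apply, B_apply, mul_mo_left0, mul_mo_right0,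
    ← B_apply k (p.1+1, p.2), hsub_smul, one_smul]
  rw [smul_comm]
  exact hsmul_sub k v _ _

lemma key1 : (Dif1 k).comp ((B k).repr.symm : V k →ₗ[k] OddPoly k) =
    (((B k).repr.symm : V k →ₗ[k] OddPoly k)).comp (C1 k) := by
  apply Finsupp.lhom_ext
  intro p v
  simp only [LinearMap.comp_apply, LinearEquiv.coe_coe, Module.Basis.repr_symm_single, C1, Wmap_single]
  rw [map_smul, map_smul, Module.Basis.repr_symm_single, Dif1, LinearMap.sub_apply,
    LinearMap.mulLeft_apply, LinearMap.mulRight_apply, B_apply, mul_mo_left1, mul_mo_right1,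
    ← B_apply k (p.1, p.2+1), hsub_smul, one_smul]
  rw [smul_comm]
  exact hsmul_sub k v _ _

lemma center_coeff (h2 : ∀ a : k, 2 * a = 0 → a = 0)
    {z : OddPoly k} (hz : z ∈ Subalgebra.center k (OddPoly k))
    (p : ℕ × ℕ) (hp : Odd p.1 ∨ Odd p.2) : (B k).repr z p = 0 := by
  rw [Subalgebra.mem_center_iff] at hz
  set c := (B k).repr z with hc
  have hzc : z = (B k).repr.symm c := by rw [hc]; simp
  have e0 : (B k).repr.symm (C0 k c) = 0 := by
    have := congrArg (fun F => F c) (key0 k)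
    simp only [LinearMap.comp_apply, LinearEquiv.coe_coe] at this
    rw [← this, ← hzc, Dif0, LinearMap.sub_apply, LinearMap.mulLeft_apply,
      LinearMap.mulRight_apply, hz (X k 0), sub_self]
  have e1 : (B k).repr.symm (C1 k c) = 0 := by
    have := congrArg (fun F => F c) (key1 k)
    simp only [LinearMap.comp_apply, LinearEquiv.coe_coe] at this
    rw [← this, ← hzc, Dif1, LinearMap.sub_apply, LinearMap.mulLeft_apply,
      LinearMap.mulRight_apply, hz (X k 1), sub_self]
  rw [LinearEquiv.map_eq_zero_iff] at e0 e1
  rcases hp with h | h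
  · have := lsum_w_apply k (fun p => (-1:k)^p.1 - 1) (fun p => (p.1, p.2 + 1))
      (fun a b hab => by simpa [Prod.ext_iff] using hab) c p
    rw [show C1 k = Wmap k _ _ from rfl] at e1
    rw [e1] at this
    simp only [Finsupp.zero_apply] at this
    rw [Odd.neg_one_pow h] at this
    apply h2
    have h' : (-(2:k)) * c p = 0 := by
      rw [show (-(2:k)) = -1 - 1 by ring]; exact this.symm
    rwa [neg_mul, neg_eq_zero] at h'
  · have := lsum_w_apply k (fun p => 1 - (-1:k)^p.2) (fun p => (p.1 + 1, p.2))
      (fun a b hab => by simpa [Prod.ext_iff] using hab) c p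
    rw [show C0 k = Wmap k _ _ from rfl] at e0
    rw [e0] at this
    simp only [Finsupp.zero_apply] at this
    rw [Odd.neg_one_pow h] at this
    apply h2
    rw [show (2:k) = 1 - -1 by ring]; exact this.symm

end Work6
section Final
variable (k : Type*) [CommRing k]

theorem stmt10' (h2 : ∀ a : k, 2 * a = 0 → a = 0) :
    ∃ b : Module.Basis (ℕ × ℕ) k (Subalgebra.center k (OddPoly k)),
      ∀ p : ℕ × ℕ,
        (b p : OddPoly k) = X k 0 ^ (2 * p.1) * X k 1 ^ (2 * p.2) := by
  classical
  set Z := Subalgebra.center k (OddPoly k) with hZ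
  have hcent : ∀ p : ℕ × ℕ, mo k (2*p.1) (2*p.2) ∈ Z := fun p => mo_central k p.1 p.2
  set v : ℕ × ℕ → Z := fun p => ⟨mo k (2*p.1) (2*p.2), hcent p⟩ with hv
  have hιv : ∀ p, ((v p : Z) : OddPoly k) = mo k (2*p.1) (2*p.2) := fun p => rfl
  -- linear independence
  have hinj : Function.Injective (fun p : ℕ × ℕ => ((2*p.1, 2*p.2) : ℕ × ℕ)) := by
    intro a b hab
    simp only [Prod.ext_iff, Prod.mk.injEq] at hab ⊢
    omega
  have hind0 : LinearIndependent k (fun p : ℕ × ℕ => mo k (2*p.1) (2*p.2)) := by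
    have h := (mo_indep k).comp _ hinj
    exact h
  have hind : LinearIndependent k v := by
    apply LinearIndependent.of_comp (Z.val.toLinearMap)
    have : (Z.val.toLinearMap ∘ v) = fun p : ℕ × ℕ => mo k (2*p.1) (2*p.2) := rfl
    rw [this]
    exact hind0
  -- spanning
  have hspan : ∀ z : Z, z ∈ Submodule.span k (Set.range v) := by
    intro z
    have hz1 : (z : OddPoly k) ∈
        Submodule.span k (Set.range fun p : ℕ × ℕ => mo k (2*p.1) (2*p.2)) := by
      have hrepr := (B k).linearCombination_repr (z : OddPoly k)
      rw [Finsupp.linearCombination_apply] at hrepr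
      rw [← hrepr]
      apply Submodule.sum_mem
      intro p hp
      have hp1 : ¬ Odd p.1 ∧ ¬ Odd p.2 := by
        by_contra hodd
        rw [Decidable.not_and_iff_or_not, not_not, not_not] at hodd
        exact (Finsupp.mem_support_iff.mp hp) (center_coeff k h2 z.2 p hodd)
      obtain ⟨a, ha⟩ := Nat.not_odd_iff_even.mp hp1.1
      obtain ⟨b, hb⟩ := Nat.not_odd_iff_even.mp hp1.2
      apply Submodule.smul_mem
      apply Submodule.subset_span
      have hpe : p = (2*a, 2*b) := by
        obtain ⟨p1, p2⟩ := p
        simp only [Prod.mk.injEq]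
        constructor <;> omega
      refine ⟨(a, b), ?_⟩
      rw [B_apply, hpe]
    -- transfer into Z
    have hmap : Submodule.map Z.val.toLinearMap (Submodule.span k (Set.range v)) =
        Submodule.span k (Set.range fun p : ℕ × ℕ => mo k (2*p.1) (2*p.2)) := by
      rw [Submodule.map_span]
      congr 1
      rw [← Set.range_comp]
      rfl
    rw [← hmap] at hz1
    obtain ⟨w, hw, hwz⟩ := hz1
    have : w = z := Subtype.ext hwz
    rwa [← this]
  refine ⟨Module.Basis.mk hind (fun z _ => hspan z), fun p => ?_⟩
  rw [Module.Basis.mk_apply]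
  rfl

end Final

/-- If `2` is a non-zero-divisor in `k`, the monomials `x₁^(2a) · x₂^(2b)`,
`(a, b) ∈ ℕ × ℕ`, form a basis of the center of `R` as a `k`-module. -/
theorem stmt10 (k : Type*) [CommRing k]
    (h2 : ∀ a : k, 2 * a = 0 → a = 0) :
    ∃ b : Module.Basis (ℕ × ℕ) k (Subalgebra.center k (OddPoly k)),
      ∀ p : ℕ × ℕ,
        (b p : OddPoly k) = X k 0 ^ (2 * p.1) * X k 1 ^ (2 * p.2) := by
  exact stmt10' k h2
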